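/- For subgroups H, G ≤ Γ × Ŝ¹ write H ≺ G if H is conjugate in Γ × Ŝ¹ to a subgroup of G. Let n ≥ 3, and let k, k′ ≥ 1, ℓ coprime to k and ℓ′ coprime to k′. Then: (1) C(n,k/ℓ) ≺ D(n,k/ℓ); (2) C(n,k/ℓ) ≺ C(n,k′/ℓ′) if and only if k ∣ k′ and ℓ ≡ ±ℓ′ (mod k); (3) D(n,k/ℓ) ≺ D(n,k′/ℓ′) if and only if k ∣ k′ and ℓ ≡ ±ℓ′ (mod k); (4) for n odd, C'(n,2) ≺ D'(n,2) and D'(n,1) ≺ D'(n,2); (5) for n odd, C(n,1) ≺ C'(n,2) and C(n,1) ≺ D'(n,1). -/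

import Mathlib

noncomputable section

open Complex

/-- The time circle `𝕋 = ℝ/ℤ`. -/
abbrev TimeCircle : Type := AddCircle (1 : ℝ)

/-- The group `Ŝ¹` of rotations and reflections of the time circle: the element
`⟨θ, false⟩` is the rotation `t ↦ θ + t` and `⟨θ, true⟩` is the reflection `t ↦ θ - t`. -/
@[ext] structure TimeSym : Type where
  shift : TimeCircle
  rev : Bool

namespace TimeSym

/-- The action of an element of `Ŝ¹` on the time circle. -/
def act (g : TimeSym) (t : TimeCircle) : TimeCircle :=
  g.shift + (if g.rev then -t else t)

instance : One TimeSym := ⟨⟨0, false⟩⟩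
instance : Mul TimeSym :=
  ⟨fun g h => ⟨g.shift + (if g.rev then -h.shift else h.shift), xor g.rev h.rev⟩⟩
instance : Inv TimeSym := ⟨fun g => ⟨if g.rev then g.shift else -g.shift, g.rev⟩⟩

@[simp] lemma one_shift : (1 : TimeSym).shift = 0 := rfl
@[simp] lemma one_rev : (1 : TimeSym).rev = false := rfl
@[simp] lemma mul_shift (g h : TimeSym) :
    (g * h).shift = g.shift + (if g.rev then -h.shift else h.shift) := rfl
@[simp] lemma mul_rev (g h : TimeSym) : (g * h).rev = xor g.rev h.rev := rfl
@[simp] lemma inv_shift (g : TimeSym) :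
    g⁻¹.shift = if g.rev then g.shift else -g.shift := rfl
@[simp] lemma inv_rev (g : TimeSym) : g⁻¹.rev = g.rev := rfl

instance : Group TimeSym where
  mul_assoc a b c := by
    obtain ⟨sa, ra⟩ := a; obtain ⟨sb, rb⟩ := b; obtain ⟨sc, rc⟩ := c
    ext
    · simp only [mul_shift, mul_rev]
      cases ra <;> cases rb <;> simp <;> abel
    · simp [Bool.xor_assoc]
  one_mul a := by ext <;> simp
  mul_one a := by obtain ⟨sa, ra⟩ := a; ext <;> cases ra <;> simp
  inv_mul_cancel a := by obtain ⟨sa, ra⟩ := a; ext <;> cases ra <;> simp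

@[simp] lemma act_one (t : TimeCircle) : (1 : TimeSym).act t = t := by simp [act]

@[simp] lemma act_mul (g h : TimeSym) (t : TimeCircle) :
    (g * h).act t = g.act (h.act t) := by
  obtain ⟨sg, rg⟩ := g; obtain ⟨sh, rh⟩ := h
  simp only [act, mul_shift, mul_rev]
  cases rg <;> cases rh <;> simp <;> abel

/-- The rotation `t ↦ θ + t` of the time circle, as an element of `Ŝ¹`. -/
def trot (θ : ℝ) : TimeSym := ⟨(θ : TimeCircle), false⟩

/-- The reflection `t ↦ θ - t` of the time circle, as an element of `Ŝ¹`. -/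
def tref (θ : ℝ) : TimeSym := ⟨(θ : TimeCircle), true⟩

end TimeSym

/-- The orthogonal group `O(2)`, realised as the group of `ℝ`-linear isometries of `ℂ`. -/
abbrev O2 : Type := ℂ ≃ₗᵢ[ℝ] ℂ

/-- `A ∈ SO(2)`: `A` is a rotation, i.e. acts as multiplication by a unit complex number. -/
def IsRotO (A : O2) : Prop := ∀ z : ℂ, A z = A 1 * z

/-- Rotation of the plane through the angle `2πa`, as an element of `O(2)`. -/
def rotO (a : ℝ) : O2 := rotation (Circle.exp (2 * Real.pi * a))

/-- The full symmetry group `Γ × Ŝ¹ = O(2) × Sₙ × Ŝ¹` acting on loops in configuration space. -/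
abbrev FullG (n : ℕ) : Type := (O2 × Equiv.Perm (Fin n)) × TimeSym

/-- The element `g = (A, σ, τ)` of `Γ × Ŝ¹` fixes the loop `u` in configuration space. -/
def Fixes {n : ℕ} (g : FullG n) (u : TimeCircle → Fin n → ℂ) : Prop :=
  ∀ (t : TimeCircle) (j : Fin n), u (g.2.act t) j = g.1.1 (u t (g.1.2⁻¹ j))

/-- The symmetry group of a loop `u`: its stabilizer in `Γ × Ŝ¹`. -/
def symmGroup (n : ℕ) (u : TimeCircle → Fin n → ℂ) : Subgroup (FullG n) where
  carrier := {g | Fixes g u}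
  one_mem' := by
    intro t j
    simp [Fixes]
  mul_mem' := by
    intro a b ha hb t j
    have h1 := ha (b.2.act t) j
    have h2 := hb t (a.1.2⁻¹ j)
    simp only [Fixes] at *
    simp only [Prod.fst_mul, Prod.snd_mul, TimeSym.act_mul]
    rw [h1, h2]
    simp [mul_inv_rev]
  inv_mem' := by
    intro a ha
    have key : ∀ (t : TimeCircle) (j : Fin n),
        a.1.1⁻¹ (u t (a.1.2 j)) = u (a.2⁻¹.act t) j := by
      intro t j
      have h := ha (a.2⁻¹.act t) (a.1.2 j)
      rw [← TimeSym.act_mul, mul_inv_cancel, TimeSym.act_one] at h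
      rw [Equiv.Perm.coe_inv, Equiv.symm_apply_apply] at h
      rw [h, LinearIsometryEquiv.coe_inv, LinearIsometryEquiv.symm_apply_apply]
    intro t j
    show u ((a⁻¹).2.act t) j = (a⁻¹).1.1 (u t ((a⁻¹).1.2⁻¹ j))
    simp only [Prod.fst_inv, Prod.snd_inv, inv_inv]
    exact (key t j).symm

variable {n : ℕ}

/-- The basic cyclic permutation `σ₁ : j ↦ j + 1`. -/
def sigma1 (n : ℕ) [NeZero n] : Equiv.Perm (Fin n) := Equiv.addLeft 1

/-- The permutation `s₁ : j ↦ -j` (in `1`-indexed notation, `j ↦ 2 - j`). -/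
def sOne (n : ℕ) [NeZero n] : Equiv.Perm (Fin n) := Equiv.neg (Fin n)

/-- The choreography element `𝔠 = (I, σ₁, -1/n)`. -/
def chorEl (n : ℕ) [NeZero n] : FullG n := ((1, sigma1 n), TimeSym.trot (-(1 / n)))

/-- Projection `ρ : Γ × Ŝ¹ → O(2)`. -/
def rhoHom (n : ℕ) : FullG n →* O2 :=
  (MonoidHom.fst _ _).comp (MonoidHom.fst _ _)

/-- Projection `σ : Γ × Ŝ¹ → Sₙ`. -/
def sigHom (n : ℕ) : FullG n →* Equiv.Perm (Fin n) :=
  (MonoidHom.snd _ _).comp (MonoidHom.fst _ _)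

/-- Projection `τ : Γ × Ŝ¹ → Ŝ¹`. -/
def tauHom (n : ℕ) : FullG n →* TimeSym := MonoidHom.snd _ _


/-- The element `(κ, s₁, 0̄)`: reflection of the plane, the involution `s₁`, time reversal. -/
def reflEl (n : ℕ) [NeZero n] : FullG n := ((Complex.conjLIE, sOne n), TimeSym.tref 0)

/-- The generator `g₀ = (R_{2πℓ/k}, e, 1/k)` of the extra symmetry of `C(n,k/ℓ)`. -/
def g0El (n k ℓ : ℕ) : FullG n := ((rotO ((ℓ : ℝ) / k), 1), TimeSym.trot (1 / k))

/-- The symmetry group `C(n, k/ℓ)`, generated by `𝔠` and `g₀`. -/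
def Cgrp (n : ℕ) [NeZero n] (k ℓ : ℕ) : Subgroup (FullG n) :=
  Subgroup.closure {chorEl n, g0El n k ℓ}

/-- The symmetry group `D(n, k/ℓ)`, generated by `𝔠`, `g₀` and `(κ, s₁, 0̄)`. -/
def Dgrp (n : ℕ) [NeZero n] (k ℓ : ℕ) : Subgroup (FullG n) :=
  Subgroup.closure {chorEl n, g0El n k ℓ, reflEl n}

open Fin.NatCast in
/-- For odd `n`, the unique square root `σ₂` of `σ₁` in `Σₙ`. -/
def sigma2 (n : ℕ) [NeZero n] : Equiv.Perm (Fin n) :=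
  Equiv.addLeft (((n + 1) / 2 : ℕ) : Fin n)

/-- The generator `(κ, σ₂, -1/(2n))` of the exceptional group `C'(n,2)`. -/
def cpEl (n : ℕ) [NeZero n] : FullG n :=
  ((Complex.conjLIE, sigma2 n), TimeSym.trot (-(1 / (2 * n))))

/-- The exceptional symmetry group `C'(n,2)` (for odd `n`), cyclic generated by `(κ, σ₂, -1/(2n))`. -/
def Cpgrp (n : ℕ) [NeZero n] : Subgroup (FullG n) := Subgroup.zpowers (cpEl n)

/-- The element `(R_π, s₁, 0̄)`. -/
def rpiEl (n : ℕ) [NeZero n] : FullG n := ((rotO (1 / 2), sOne n), TimeSym.tref 0)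

/-- The exceptional symmetry group `D'(n,1)` (for odd `n`), generated by `𝔠` and `(R_π, s₁, 0̄)`. -/
def Dp1grp (n : ℕ) [NeZero n] : Subgroup (FullG n) :=
  Subgroup.closure {chorEl n, rpiEl n}

/-- The exceptional symmetry group `D'(n,2)` (for odd `n`), generated by `(κ, σ₂, -1/(2n))`
and `(R_π, s₁, 0̄)`. -/
def Dp2grp (n : ℕ) [NeZero n] : Subgroup (FullG n) :=
  Subgroup.closure {cpEl n, rpiEl n}

/-- The symmetry group `D(n, ∞/ℓ)` of the speed-`ℓ` circular choreography, generated by `𝔠`,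
`(κ, s₁, 0̄)` and all elements `(R_{2πℓθ}, e, θ)` for `θ ∈ S¹`. -/
def circGrp (n : ℕ) [NeZero n] (ℓ : ℕ) : Subgroup (FullG n) :=
  Subgroup.closure
    ({chorEl n, reflEl n} ∪ {g | ∃ θ : ℝ, g = ((rotO ((ℓ : ℝ) * θ), 1), TimeSym.trot θ)})

/-- `H` is conjugate to `K` in `Γ × Ŝ¹`. -/
def IsConjTo {n : ℕ} (H K : Subgroup (FullG n)) : Prop :=
  ∃ γ : FullG n, Subgroup.map (MulAut.conj γ).toMonoidHom H = K

/-- `H ≺ K` : `H` is conjugate in `Γ × Ŝ¹` to a subgroup of `K`. -/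
def SubConjTo {n : ℕ} (H K : Subgroup (FullG n)) : Prop :=
  ∃ γ : FullG n, Subgroup.map (MulAut.conj γ).toMonoidHom H ≤ K

/-! ### Auxiliary lemmas -/

namespace TimeSym

@[simp] lemma trot_shift (x : ℝ) : (trot x).shift = (x : TimeCircle) := rfl
@[simp] lemma trot_rev (x : ℝ) : (trot x).rev = false := rfl
@[simp] lemma tref_shift (x : ℝ) : (tref x).shift = (x : TimeCircle) := rfl
@[simp] lemma tref_rev (x : ℝ) : (tref x).rev = true := rfl

lemma trot_mul (x y : ℝ) : trot x * trot y = trot (x + y) := by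
  ext
  · simp [trot, AddCircle.coe_add]
  · simp [trot]

lemma trot_inv (x : ℝ) : (trot x)⁻¹ = trot (-x) := by
  ext
  · simp [trot, AddCircle.coe_neg]
  · simp [trot]

lemma trot_zpow (x : ℝ) : ∀ a : ℤ, (trot x) ^ a = trot (a * x) := by
  have hpow : ∀ m : ℕ, (trot x) ^ m = trot (m * x) := by
    intro m
    induction m with
    | zero => ext <;> simp [trot]
    | succ m ih =>
        rw [pow_succ, ih, trot_mul]
        congr 1
        push_cast
        ring
  intro a
  induction a using Int.rec with
  | ofNat m => simpa using hpow m
  | negSucc m =>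
      rw [zpow_negSucc, hpow, trot_inv]
      congr 1
      push_cast
      ring

lemma trot_eq_trot_iff {x y : ℝ} : trot x = trot y ↔ ∃ m : ℤ, x - y = m := by
  constructor
  · intro h
    have h' : ((x - y : ℝ) : TimeCircle) = 0 := by
      have hxy : (x : TimeCircle) = y := congrArg shift h
      rw [AddCircle.coe_sub, hxy, sub_self]
    obtain ⟨m, hm⟩ := (AddCircle.coe_eq_zero_iff _).1 h'
    exact ⟨m, by simpa using hm.symm⟩
  · rintro ⟨m, hm⟩
    have : (x : TimeCircle) = y := by
      have : ((x - y : ℝ) : TimeCircle) = 0 :=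
        (AddCircle.coe_eq_zero_iff _).2 ⟨m, by simpa using hm.symm⟩
      rwa [AddCircle.coe_sub, sub_eq_zero] at this
    ext <;> simp [trot, this]

lemma tref_zero_mul_tref_zero : tref 0 * tref 0 = 1 := by
  ext <;> simp [tref]

/-- Conjugating the rotation `trot x` by `s` gives `trot (± x)`. -/
lemma conj_trot (s : TimeSym) (x : ℝ) :
    s * trot x * s⁻¹ = trot ((if s.rev then (-1 : ℝ) else 1) * x) := by
  obtain ⟨σ, r⟩ := s
  cases r <;> ext <;>
    simp [trot, AddCircle.coe_neg] <;> abel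

end TimeSym

section RotO

lemma rotO_mul (a b : ℝ) : rotO a * rotO b = rotO (a + b) := by
  rw [rotO, rotO, rotO, ← map_mul, ← Circle.exp_add]
  ring_nf

lemma rotO_zero : rotO 0 = 1 := by
  rw [rotO]
  norm_num

lemma rotO_inv (a : ℝ) : (rotO a)⁻¹ = rotO (-a) := by
  rw [inv_eq_iff_mul_eq_one, rotO_mul]
  simpa using rotO_zero

lemma rotO_zpow (x : ℝ) : ∀ a : ℤ, (rotO x) ^ a = rotO (a * x) := by
  have hpow : ∀ m : ℕ, (rotO x) ^ m = rotO (m * x) := by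
    intro m
    induction m with
    | zero => simpa using rotO_zero.symm
    | succ m ih =>
        rw [pow_succ, ih, rotO_mul]
        congr 1
        push_cast
        ring
  intro a
  induction a using Int.rec with
  | ofNat m => simpa using hpow m
  | negSucc m =>
      rw [zpow_negSucc, hpow, rotO_inv]
      congr 1
      push_cast
      ring

lemma rotO_eq_one_iff {x : ℝ} : rotO x = 1 ↔ ∃ m : ℤ, x = m := by
  rw [rotO, ← map_one rotation,
    (rotation_injective.eq_iff : _ ↔ Circle.exp (2 * Real.pi * x) = 1),
    Circle.exp_eq_one]
  constructor
  · rintro ⟨m, hm⟩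
    refine ⟨m, ?_⟩
    have h2π : (2 * Real.pi) ≠ 0 := by positivity
    have : 2 * Real.pi * x = 2 * Real.pi * m := by rw [hm]; ring
    exact mul_left_cancel₀ h2π this
  · rintro ⟨m, rfl⟩
    exact ⟨m, by ring⟩

lemma rotO_eq_rotO_iff {x y : ℝ} : rotO x = rotO y ↔ ∃ m : ℤ, x - y = m := by
  constructor
  · intro h
    have : rotO (x - y) * rotO y = rotO y := by
      rw [rotO_mul, sub_add_cancel, h]
    exact rotO_eq_one_iff.1 (mul_right_cancel (by rw [one_mul, this]))
  · rintro ⟨m, hm⟩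
    have : rotO x = rotO (x - y) * rotO y := by rw [rotO_mul, sub_add_cancel]
    rw [this, show x - y = (m : ℝ) from hm, rotO_eq_one_iff.2 ⟨m, rfl⟩, one_mul]

/-- Conjugation in `O(2)` either preserves or inverts every rotation. -/
lemma conj_rotO (A : O2) (θ : ℝ) :
    A * rotO θ * A⁻¹ = rotO θ ∨ A * rotO θ * A⁻¹ = rotO (-θ) := by
  obtain ⟨a, h | h⟩ := linear_isometry_complex A
  · left
    rw [h, rotO, ← map_inv, ← map_mul, ← map_mul, mul_inv_cancel_comm]
  · right
    rw [mul_inv_eq_iff_eq_mul]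
    refine LinearIsometryEquiv.ext fun z => ?_
    rw [h]
    simp only [LinearIsometryEquiv.coe_mul, Function.comp_apply,
      LinearIsometryEquiv.trans_apply, Complex.conjLIE_apply, rotO, rotation_apply,
      map_mul]
    rw [← Circle.coe_inv_eq_conj, ← Circle.exp_neg]
    ring_nf

end RotO

section PermLemmas

variable (n : ℕ) [NeZero n]

open Fin.CommRing in
lemma sigma1_zpow (a : ℤ) : sigma1 n ^ a = Equiv.addLeft ((a : Fin n)) := by
  rw [sigma1, Equiv.zsmul_addLeft]
  congr 1
  exact zsmul_one a

lemma addLeft_eq_one_iff {x : Fin n} : Equiv.addLeft x = 1 ↔ x = 0 := by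
  constructor
  · intro h
    have := congrArg (fun e : Equiv.Perm (Fin n) => e 0) h
    simpa using this
  · rintro rfl
    exact Equiv.addLeft_zero

open Fin.CommRing in
lemma sigma1_zpow_eq_one_iff (a : ℤ) : sigma1 n ^ a = 1 ↔ (n : ℤ) ∣ a := by
  rw [sigma1_zpow, addLeft_eq_one_iff, CharP.intCast_eq_zero_iff (Fin n) n a]

open Fin.CommRing in
lemma sigma2_sq (hodd : Odd n) : sigma2 n * sigma2 n = sigma1 n := by
  rw [sigma2, sigma1, ← Equiv.addLeft_add]
  congr 1
  obtain ⟨m, hm⟩ := hodd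
  have h2 : ((n + 1) / 2 + (n + 1) / 2 : ℕ) = n + 1 := by omega
  rw [← Nat.cast_add, h2]
  push_cast
  simp [CharP.cast_eq_zero]

lemma sOne_mul_self : sOne n * sOne n = 1 := by
  ext j
  simp [sOne, Equiv.Perm.mul_apply, Equiv.neg_apply]

lemma sOne_inv : (sOne n)⁻¹ = sOne n :=
  inv_eq_of_mul_eq_one_right (sOne_mul_self n)

open Fin.CommRing in
lemma sOne_conj_addLeft (x : Fin n) :
    sOne n * Equiv.addLeft x * (sOne n)⁻¹ = Equiv.addLeft (-x) := by
  rw [sOne_inv]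
  ext j
  simp only [sOne, Equiv.Perm.mul_apply, Equiv.neg_apply, Equiv.coe_addLeft]
  ring

end PermLemmas

section ElemLemmas

variable (n : ℕ) [NeZero n]

lemma fullG_mul (A B : O2) (σ τ : Equiv.Perm (Fin n)) (s t : TimeSym) :
    (((A, σ), s) : FullG n) * ((B, τ), t) = ((A * B, σ * τ), s * t) := rfl

lemma fullG_zpow (A : O2) (σ : Equiv.Perm (Fin n)) (s : TimeSym) (a : ℤ) :
    (((A, σ), s) : FullG n) ^ a = ((A ^ a, σ ^ a), s ^ a) := by
  rfl

lemma chorEl_zpow (a : ℤ) :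
    chorEl n ^ a = ((1, sigma1 n ^ a), TimeSym.trot (a * (-(1 / n)))) := by
  rw [chorEl, fullG_zpow, one_zpow, TimeSym.trot_zpow]

lemma g0El_zpow (k ℓ : ℕ) (b : ℤ) :
    g0El n k ℓ ^ b = ((rotO (b * (ℓ / k)), 1), TimeSym.trot (b * (1 / k))) := by
  rw [g0El, fullG_zpow, one_zpow, TimeSym.trot_zpow, rotO_zpow]

lemma chorEl_mul_g0El_zpow (a b : ℤ) (k ℓ : ℕ) :
    chorEl n ^ a * g0El n k ℓ ^ b =
      ((rotO (b * (ℓ / k)), sigma1 n ^ a),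
        TimeSym.trot (a * (-(1 / n)) + b * (1 / k))) := by
  rw [chorEl_zpow, g0El_zpow, fullG_mul, one_mul, mul_one, TimeSym.trot_mul]

end ElemLemmas

section ClosureLemmas

variable {G : Type*} [Group G]

lemma mem_closure_pair_of_commute {c g : G} (hcg : Commute c g) {x : G}
    (hx : x ∈ Subgroup.closure {c, g}) : ∃ a b : ℤ, x = c ^ a * g ^ b := by
  let K : Subgroup G :=
    { carrier := {x | ∃ a b : ℤ, x = c ^ a * g ^ b}
      one_mem' := ⟨0, 0, by simp⟩
      mul_mem' := by
        rintro x y ⟨a, b, rfl⟩ ⟨a', b', rfl⟩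
        exact ⟨a + a', b + b', by
          rw [(hcg.symm.zpow_zpow b a').mul_mul_mul_comm, ← zpow_add, ← zpow_add]⟩
      inv_mem' := by
        rintro x ⟨a, b, rfl⟩
        refine ⟨-a, -b, ?_⟩
        rw [mul_inv_rev, ← zpow_neg, ← zpow_neg]
        exact ((hcg.zpow_zpow (-a) (-b)).eq).symm }
  have hle : Subgroup.closure {c, g} ≤ K := by
    rw [Subgroup.closure_le]
    rintro x (rfl | rfl)
    exacts [⟨1, 0, by simp⟩, ⟨0, 1, by simp⟩]
  exact hle hx

lemma mem_closure_triple {c g r : G} (hcg : Commute c g)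
    (hrc : r * c * r⁻¹ = c⁻¹) (hrg : r * g * r⁻¹ = g⁻¹) (hrr : r * r = 1)
    {x : G} (hx : x ∈ Subgroup.closure {c, g, r}) :
    ∃ a b : ℤ, x = c ^ a * g ^ b ∨ x = c ^ a * g ^ b * r := by
  have hrinv : r⁻¹ = r := inv_eq_of_mul_eq_one_right hrr
  have hLL : ∀ a b a' b' : ℤ,
      (c ^ a * g ^ b) * (c ^ a' * g ^ b') = c ^ (a + a') * g ^ (b + b') := by
    intro a b a' b'
    rw [(hcg.symm.zpow_zpow b a').mul_mul_mul_comm, ← zpow_add, ← zpow_add]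
  have src : ∀ a : ℤ, r * c ^ a = c ^ (-a) * r := by
    intro a
    have h1 : SemiconjBy r c c⁻¹ := mul_inv_eq_iff_eq_mul.mp hrc
    have h2 := h1.zpow_right a
    rwa [inv_zpow, ← zpow_neg] at h2
  have srg : ∀ b : ℤ, r * g ^ b = g ^ (-b) * r := by
    intro b
    have h1 : SemiconjBy r g g⁻¹ := mul_inv_eq_iff_eq_mul.mp hrg
    have h2 := h1.zpow_right b
    rwa [inv_zpow, ← zpow_neg] at h2
  have s2 : ∀ a b : ℤ, r * (c ^ a * g ^ b) = (c ^ (-a) * g ^ (-b)) * r := by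
    intro a b
    rw [← mul_assoc, src, mul_assoc, srg, ← mul_assoc]
  let K : Subgroup G :=
    { carrier := {x | ∃ a b : ℤ, x = c ^ a * g ^ b ∨ x = c ^ a * g ^ b * r}
      one_mem' := ⟨0, 0, Or.inl (by simp)⟩
      mul_mem' := by
        rintro x y ⟨a, b, rfl | rfl⟩ ⟨a', b', rfl | rfl⟩
        · exact ⟨a + a', b + b', Or.inl (hLL a b a' b')⟩
        · exact ⟨a + a', b + b', Or.inr (by rw [← mul_assoc, hLL])⟩
        · refine ⟨a + -a', b + -b', Or.inr ?_⟩
          rw [mul_assoc (c ^ a * g ^ b) r, s2, ← mul_assoc, hLL]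
        · refine ⟨a + -a', b + -b', Or.inl ?_⟩
          rw [mul_assoc (c ^ a * g ^ b) r, ← mul_assoc r, s2,
            mul_assoc (c ^ (-a') * g ^ (-b')) r r, hrr, mul_one, hLL]
      inv_mem' := by
        rintro x ⟨a, b, rfl | rfl⟩
        · refine ⟨-a, -b, Or.inl ?_⟩
          rw [mul_inv_rev, ← zpow_neg, ← zpow_neg]
          exact ((hcg.zpow_zpow (-a) (-b)).eq).symm
        · refine ⟨a, b, Or.inr ?_⟩
          refine inv_eq_of_mul_eq_one_right ?_
          rw [mul_assoc (c ^ a * g ^ b) r, ← mul_assoc r, s2,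
            mul_assoc (c ^ (-a) * g ^ (-b)) r r, hrr, mul_one, hLL]
          simp }
  have hle : Subgroup.closure {c, g, r} ≤ K := by
    rw [Subgroup.closure_le]
    rintro x (rfl | rfl | rfl)
    exacts [⟨1, 0, Or.inl (by simp)⟩, ⟨0, 1, Or.inl (by simp)⟩,
      ⟨0, 0, Or.inr (by simp)⟩]
  exact hle hx

end ClosureLemmas

section ConjHelpers

variable {m : ℕ}

lemma subConjTo_of_le {H K : Subgroup (FullG m)} (h : H ≤ K) : SubConjTo H K := by
  refine ⟨1, ?_⟩
  intro x hx
  rw [Subgroup.mem_map] at hx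
  obtain ⟨y, hy, rfl⟩ := hx
  have h1 : (MulAut.conj (1 : FullG m)).toMonoidHom y = y := by simp
  rw [h1]
  exact h hy

lemma subConjTo_closure {S : Set (FullG m)} {K : Subgroup (FullG m)} (γ : FullG m)
    (h : ∀ x ∈ S, γ * x * γ⁻¹ ∈ K) : SubConjTo (Subgroup.closure S) K := by
  refine ⟨γ, ?_⟩
  rw [MonoidHom.map_closure, Subgroup.closure_le]
  rintro y ⟨x, hx, rfl⟩
  simpa using h x hx

lemma subConjTo_mem {H K : Subgroup (FullG m)} (hHK : SubConjTo H K) :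
    ∃ γ : FullG m, ∀ x ∈ H, γ * x * γ⁻¹ ∈ K := by
  obtain ⟨γ, hγ⟩ := hHK
  refine ⟨γ, fun x hx => ?_⟩
  have := hγ (Subgroup.mem_map_of_mem (MulAut.conj γ).toMonoidHom hx)
  simpa using this

end ConjHelpers

section Relations

variable (n : ℕ) [NeZero n]

lemma conjLIE_sq : (Complex.conjLIE : O2) * Complex.conjLIE = 1 := by
  refine LinearIsometryEquiv.ext fun z => ?_
  simp [LinearIsometryEquiv.coe_mul]

lemma conjLIE_conj_rotO (θ : ℝ) :
    (Complex.conjLIE : O2) * rotO θ * Complex.conjLIE = rotO (-θ) := by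
  refine LinearIsometryEquiv.ext fun z => ?_
  simp only [LinearIsometryEquiv.coe_mul, Function.comp_apply, Complex.conjLIE_apply,
    rotO, rotation_apply, map_mul, Complex.conj_conj]
  rw [← Circle.coe_inv_eq_conj, ← Circle.exp_neg,
    show 2 * Real.pi * (-θ) = -(2 * Real.pi * θ) by ring]

lemma commute_chorEl_g0El (k ℓ : ℕ) : Commute (chorEl n) (g0El n k ℓ) := by
  show chorEl n * g0El n k ℓ = g0El n k ℓ * chorEl n
  rw [chorEl, g0El, fullG_mul, fullG_mul, one_mul, mul_one, one_mul, mul_one,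
    TimeSym.trot_mul, TimeSym.trot_mul, add_comm]

lemma tref_zero_inv : (TimeSym.tref 0)⁻¹ = TimeSym.tref 0 :=
  inv_eq_of_mul_eq_one_right TimeSym.tref_zero_mul_tref_zero

lemma tref_conj_trot (x : ℝ) :
    TimeSym.tref 0 * TimeSym.trot x * TimeSym.tref 0 = TimeSym.trot (-x) := by
  have h := TimeSym.conj_trot (TimeSym.tref 0) x
  rw [tref_zero_inv] at h
  simpa using h

lemma reflEl_sq : reflEl n * reflEl n = 1 := by
  rw [reflEl, fullG_mul, conjLIE_sq, sOne_mul_self, TimeSym.tref_zero_mul_tref_zero]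
  rfl

lemma reflEl_inv : (reflEl n)⁻¹ = reflEl n := inv_eq_of_mul_eq_one_right (reflEl_sq n)

open Fin.CommRing in
lemma sOne_conj_sigma1_zpow (a : ℤ) :
    sOne n * sigma1 n ^ a * (sOne n)⁻¹ = sigma1 n ^ (-a) := by
  rw [sigma1_zpow, sigma1_zpow, sOne_conj_addLeft]
  congr 1
  push_cast
  ring

lemma reflEl_conj_chorEl : reflEl n * chorEl n * (reflEl n)⁻¹ = (chorEl n)⁻¹ := by
  rw [reflEl_inv, ← zpow_neg_one (chorEl n), chorEl_zpow, reflEl, chorEl,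
    fullG_mul, fullG_mul]
  refine congrArg₂ Prod.mk (congrArg₂ Prod.mk ?_ ?_) ?_
  · rw [mul_one, conjLIE_sq]
  · have h := sOne_conj_sigma1_zpow n 1
    rw [sOne_inv, zpow_one] at h
    exact h
  · rw [tref_conj_trot]
    congr 1
    push_cast
    ring

lemma reflEl_conj_g0El (k ℓ : ℕ) :
    reflEl n * g0El n k ℓ * (reflEl n)⁻¹ = (g0El n k ℓ)⁻¹ := by
  rw [reflEl_inv, ← zpow_neg_one (g0El n k ℓ), g0El_zpow, reflEl, g0El,
    fullG_mul, fullG_mul]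
  refine congrArg₂ Prod.mk (congrArg₂ Prod.mk ?_ ?_) ?_
  · rw [conjLIE_conj_rotO]
    congr 1
    push_cast
    ring
  · rw [mul_one, sOne_mul_self]
  · rw [tref_conj_trot]
    congr 1
    push_cast
    ring

lemma cpEl_sq (hodd : Odd n) : cpEl n * cpEl n = chorEl n := by
  have hn0 : (n : ℝ) ≠ 0 := Nat.cast_ne_zero.mpr (NeZero.ne n)
  rw [cpEl, chorEl, fullG_mul, conjLIE_sq, sigma2_sq n hodd, TimeSym.trot_mul]
  congr 2
  field_simp
  ring

lemma g0El_one_one : g0El n 1 1 = 1 := by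
  rw [g0El]
  have h1 : rotO ((1 : ℕ) / (1 : ℕ) : ℝ) = 1 := by
    rw [rotO_eq_one_iff]
    exact ⟨1, by norm_num⟩
  have h2 : TimeSym.trot (1 / (1 : ℕ) : ℝ) = 1 := by
    have := TimeSym.trot_eq_trot_iff (x := (1 / (1:ℕ) : ℝ)) (y := 0)
    have h0 : TimeSym.trot 0 = 1 := by ext <;> simp [TimeSym.trot]
    rw [← h0]
    exact (TimeSym.trot_eq_trot_iff).2 ⟨1, by norm_num⟩
  rw [h1, h2]
  rfl

/-- The auxiliary conjugator `((1, s₁), 0̄)`. -/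
def wEl (n : ℕ) [NeZero n] : FullG n := ((1, sOne n), TimeSym.tref 0)

lemma wEl_sq : wEl n * wEl n = 1 := by
  rw [wEl, fullG_mul, one_mul, sOne_mul_self, TimeSym.tref_zero_mul_tref_zero]
  rfl

lemma wEl_inv : (wEl n)⁻¹ = wEl n := inv_eq_of_mul_eq_one_right (wEl_sq n)

lemma wEl_conj_chorEl : wEl n * chorEl n * (wEl n)⁻¹ = (chorEl n)⁻¹ := by
  rw [wEl_inv, ← zpow_neg_one (chorEl n), chorEl_zpow, wEl, chorEl,
    fullG_mul, fullG_mul]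
  refine congrArg₂ Prod.mk (congrArg₂ Prod.mk ?_ ?_) ?_
  · rw [mul_one, mul_one]
  · have h := sOne_conj_sigma1_zpow n 1
    rw [sOne_inv, zpow_one] at h
    exact h
  · rw [tref_conj_trot]
    congr 1
    push_cast
    ring

lemma wEl_conj_g0El (k ℓ : ℕ) :
    wEl n * g0El n k ℓ * (wEl n)⁻¹ =
      ((rotO ((ℓ : ℝ) / k), 1), TimeSym.trot (-(1 / k))) := by
  rw [wEl_inv, wEl, g0El, fullG_mul, fullG_mul]
  refine congrArg₂ Prod.mk (congrArg₂ Prod.mk ?_ ?_) ?_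
  · rw [one_mul, mul_one]
  · rw [mul_one, sOne_mul_self]
  · rw [tref_conj_trot]

lemma wEl_conj_reflEl : wEl n * reflEl n * (wEl n)⁻¹ = reflEl n := by
  rw [wEl_inv, wEl, reflEl, fullG_mul, fullG_mul]
  refine congrArg₂ Prod.mk (congrArg₂ Prod.mk ?_ ?_) ?_
  · rw [one_mul, mul_one]
  · rw [sOne_mul_self, one_mul]
  · rw [TimeSym.tref_zero_mul_tref_zero, one_mul]

end Relations

section KeyLemmas

variable (n : ℕ) [NeZero n]

lemma g0El_eq_zpow {k k' ℓ ℓ' : ℕ} (hk : 1 ≤ k) (hk' : 1 ≤ k') (hdvd : k ∣ k')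
    (hmod : (ℓ : ℤ) ≡ (ℓ' : ℤ) [ZMOD (k : ℤ)]) :
    g0El n k ℓ = g0El n k' ℓ' ^ ((k' / k : ℕ) : ℤ) := by
  obtain ⟨q, rfl⟩ := hdvd
  have hq : 0 < q := by
    rcases Nat.eq_zero_or_pos q with rfl | hq
    · omega
    · exact hq
  have hkR : (k : ℝ) ≠ 0 := Nat.cast_ne_zero.mpr (by omega)
  have hqR : (q : ℝ) ≠ 0 := Nat.cast_ne_zero.mpr (by omega)
  rw [Nat.mul_div_cancel_left q hk, g0El_zpow, g0El]
  obtain ⟨t, ht⟩ := Int.modEq_iff_dvd.mp hmod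
  have htR : (ℓ' : ℝ) - ℓ = k * t := by exact_mod_cast ht
  refine congrArg₂ Prod.mk (congrArg₂ Prod.mk ?_ rfl) ?_
  · rw [rotO_eq_rotO_iff]
    refine ⟨-t, ?_⟩
    have h1 : (q : ℝ) * ((ℓ' : ℝ) / ((k : ℝ) * q)) = (ℓ' : ℝ) / k := by
      field_simp
    push_cast
    rw [h1, div_sub_div_same, show (ℓ : ℝ) - ℓ' = (k : ℝ) * -t by push_cast; linarith [htR],
      mul_div_cancel_left₀ _ hkR]
  · congr 1
    push_cast
    field_simp

lemma key_extract {k k' ℓ ℓ' : ℕ} (hk : 1 ≤ k) (hk' : 1 ≤ k')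
    (γ : FullG n) (a b : ℤ)
    (h : γ * g0El n k ℓ * γ⁻¹ = chorEl n ^ a * g0El n k' ℓ' ^ b) :
    k ∣ k' ∧ ((ℓ : ℤ) ≡ (ℓ' : ℤ) [ZMOD (k : ℤ)] ∨ (ℓ : ℤ) ≡ -(ℓ' : ℤ) [ZMOD (k : ℤ)]) := by
  have hnR : (n : ℝ) ≠ 0 := Nat.cast_ne_zero.mpr (NeZero.ne n)
  have hkR : (k : ℝ) ≠ 0 := Nat.cast_ne_zero.mpr (by omega)
  have hk'R : (k' : ℝ) ≠ 0 := Nat.cast_ne_zero.mpr (by omega)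
  have hk'Z : (k' : ℤ) ≠ 0 := Int.natCast_ne_zero.mpr (by omega)
  obtain ⟨⟨A, π⟩, s⟩ := γ
  rw [show ((((A, π), s) : FullG n))⁻¹ = ((A⁻¹, π⁻¹), s⁻¹) from rfl, g0El,
    fullG_mul, fullG_mul, chorEl_mul_g0El_zpow] at h
  have h1 : A * rotO ((ℓ : ℝ) / k) * A⁻¹ = rotO (b * ((ℓ' : ℝ) / k')) :=
    congrArg (fun z : FullG n => z.1.1) h
  have h2 : (1 : Equiv.Perm (Fin n)) = sigma1 n ^ a := by
    have := congrArg (fun z : FullG n => z.1.2) h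
    simpa using this
  have h3 : s * TimeSym.trot (1 / (k : ℝ)) * s⁻¹ =
      TimeSym.trot (a * (-(1 / (n : ℝ))) + b * (1 / (k' : ℝ))) :=
    congrArg (fun z : FullG n => z.2) h
  -- the permutation component forces `n ∣ a`
  obtain ⟨a₀, rfl⟩ : ∃ a₀ : ℤ, a = n * a₀ :=
    (sigma1_zpow_eq_one_iff n a).mp h2.symm
  -- the time component
  obtain ⟨ε, hε, hs⟩ : ∃ ε : ℤ, (ε = 1 ∨ ε = -1) ∧
      s * TimeSym.trot (1 / (k : ℝ)) * s⁻¹ = TimeSym.trot (ε * (1 / (k : ℝ))) := by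
    rcases hrev : s.rev with _ | _
    · refine ⟨1, Or.inl rfl, ?_⟩
      rw [TimeSym.conj_trot, hrev]
      push_cast
      norm_num
    · refine ⟨-1, Or.inr rfl, ?_⟩
      rw [TimeSym.conj_trot, hrev]
      push_cast
      norm_num
  obtain ⟨mt, hmt⟩ := TimeSym.trot_eq_trot_iff.mp (hs.symm.trans h3)
  -- the rotation component
  obtain ⟨δ, hδ, hr⟩ : ∃ δ : ℤ, (δ = 1 ∨ δ = -1) ∧
      rotO (δ * ((ℓ : ℝ) / k)) = rotO (b * ((ℓ' : ℝ) / k')) := by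
    rcases conj_rotO A ((ℓ : ℝ) / k) with hc | hc
    · refine ⟨1, Or.inl rfl, ?_⟩
      rw [show (((1 : ℤ) : ℝ)) * ((ℓ : ℝ) / k) = (ℓ : ℝ) / k by push_cast; ring, ← hc]
      exact h1
    · refine ⟨-1, Or.inr rfl, ?_⟩
      rw [show (((-1 : ℤ) : ℝ)) * ((ℓ : ℝ) / k) = -((ℓ : ℝ) / k) by push_cast; ring, ← hc]
      exact h1
  obtain ⟨mr, hmr⟩ := rotO_eq_rotO_iff.mp hr
  -- convert the two real relations to integer relations
  have E2 : (ε : ℤ) * k' = b * k + (mt - a₀) * (k * k') := by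
    have hR : (n : ℝ) * ((ε : ℝ) * k') = (n : ℝ) * ((b : ℝ) * k + ((mt : ℝ) - a₀) * (k * k')) := by
      field_simp at hmt
      push_cast at hmt ⊢
      linear_combination hmt
    have := mul_left_cancel₀ hnR hR
    exact_mod_cast this
  have E1 : (δ : ℤ) * ℓ * k' = b * ℓ' * k + mr * (k * k') := by
    have : (δ : ℝ) * ℓ * k' = b * ℓ' * k + (mr : ℝ) * (k * k') := by
      field_simp at hmr
      linear_combination hmr
    exact_mod_cast this
  have hdvd : (k : ℤ) ∣ (k' : ℤ) := by
    rcases hε with rfl | rfl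
    · exact ⟨b + (mt - a₀) * k', by linear_combination E2⟩
    · exact ⟨-b - (mt - a₀) * k', by linear_combination -E2⟩
  have hdvdN : k ∣ k' := Int.ofNat_dvd.mp hdvd
  refine ⟨hdvdN, ?_⟩
  have hcancel : (δ : ℤ) * ℓ - ε * ℓ' = (mr - (mt - a₀) * ℓ') * k := by
    have hs : (k' : ℤ) * ((δ : ℤ) * ℓ - ε * ℓ') = (k' : ℤ) * ((mr - (mt - a₀) * ℓ') * k) := by
      linear_combination E1 - (ℓ' : ℤ) * E2
    exact mul_left_cancel₀ hk'Z hs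
  rcases hδ with rfl | rfl <;> rcases hε with rfl | rfl
  · exact Or.inl (Int.modEq_iff_dvd.mpr ⟨-(mr - (mt - a₀) * ℓ'), by linear_combination -hcancel⟩)
  · exact Or.inr (Int.modEq_iff_dvd.mpr ⟨-(mr - (mt - a₀) * ℓ'), by linear_combination -hcancel⟩)
  · exact Or.inr (Int.modEq_iff_dvd.mpr ⟨mr - (mt - a₀) * ℓ', by linear_combination hcancel⟩)
  · exact Or.inl (Int.modEq_iff_dvd.mpr ⟨mr - (mt - a₀) * ℓ', by linear_combination hcancel⟩)

end KeyLemmas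

section MoreKey

variable (n : ℕ) [NeZero n]

lemma wEl_g0El_eq {k k' ℓ ℓ' : ℕ} (hk : 1 ≤ k) (hk' : 1 ≤ k') (hdvd : k ∣ k')
    (hmod : (ℓ : ℤ) ≡ -(ℓ' : ℤ) [ZMOD (k : ℤ)]) :
    wEl n * g0El n k ℓ * (wEl n)⁻¹ = g0El n k' ℓ' ^ (-((k' / k : ℕ) : ℤ)) := by
  obtain ⟨q, rfl⟩ := hdvd
  have hq : 0 < q := by
    rcases Nat.eq_zero_or_pos q with rfl | hq
    · omega
    · exact hq
  have hkR : (k : ℝ) ≠ 0 := Nat.cast_ne_zero.mpr (by omega)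
  have hqR : (q : ℝ) ≠ 0 := Nat.cast_ne_zero.mpr (by omega)
  rw [wEl_conj_g0El, Nat.mul_div_cancel_left q hk, g0El_zpow]
  obtain ⟨t, ht⟩ := Int.modEq_iff_dvd.mp hmod
  have htR : -(ℓ' : ℝ) - ℓ = k * t := by exact_mod_cast ht
  refine congrArg₂ Prod.mk (congrArg₂ Prod.mk ?_ rfl) ?_
  · rw [rotO_eq_rotO_iff]
    refine ⟨-t, ?_⟩
    push_cast
    have h1 : -(q : ℝ) * ((ℓ' : ℝ) / ((k : ℝ) * q)) = -((ℓ' : ℝ) / k) := by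
      field_simp
    rw [h1, sub_neg_eq_add, ← add_div,
      show (ℓ : ℝ) + ℓ' = (k : ℝ) * -t by push_cast; linarith [htR],
      mul_div_cancel_left₀ _ hkR]
  · congr 1
    push_cast
    field_simp

lemma chor_mem_Cgrp (k ℓ : ℕ) : chorEl n ∈ Cgrp n k ℓ :=
  Subgroup.subset_closure (Set.mem_insert _ _)

lemma g0_mem_Cgrp (k ℓ : ℕ) : g0El n k ℓ ∈ Cgrp n k ℓ :=
  Subgroup.subset_closure (Set.mem_insert_of_mem _ rfl)

lemma chor_mem_Dgrp (k ℓ : ℕ) : chorEl n ∈ Dgrp n k ℓ :=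
  Subgroup.subset_closure (Set.mem_insert _ _)

lemma g0_mem_Dgrp (k ℓ : ℕ) : g0El n k ℓ ∈ Dgrp n k ℓ :=
  Subgroup.subset_closure (Set.mem_insert_of_mem _ (Set.mem_insert _ _))

lemma refl_mem_Dgrp (k ℓ : ℕ) : reflEl n ∈ Dgrp n k ℓ :=
  Subgroup.subset_closure (Set.mem_insert_of_mem _ (Set.mem_insert_of_mem _ rfl))

end MoreKey

/-- **Isotropy subgroup lattice.** Subconjugacy relations among the symmetry
groups of planar choreographies. -/
theorem statement_10 (n : ℕ) (hn : 3 ≤ n) [NeZero n]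
    (k k' ℓ ℓ' : ℕ) (hk : 1 ≤ k) (hk' : 1 ≤ k')
    (hl : Nat.Coprime ℓ k) (hl' : Nat.Coprime ℓ' k') :
    SubConjTo (Cgrp n k ℓ) (Dgrp n k ℓ) ∧
    (SubConjTo (Cgrp n k ℓ) (Cgrp n k' ℓ') ↔
      k ∣ k' ∧ ((ℓ : ℤ) ≡ (ℓ' : ℤ) [ZMOD (k : ℤ)] ∨ (ℓ : ℤ) ≡ -(ℓ' : ℤ) [ZMOD (k : ℤ)])) ∧
    (SubConjTo (Dgrp n k ℓ) (Dgrp n k' ℓ') ↔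
      k ∣ k' ∧ ((ℓ : ℤ) ≡ (ℓ' : ℤ) [ZMOD (k : ℤ)] ∨ (ℓ : ℤ) ≡ -(ℓ' : ℤ) [ZMOD (k : ℤ)])) ∧
    (Odd n → SubConjTo (Cpgrp n) (Dp2grp n) ∧ SubConjTo (Dp1grp n) (Dp2grp n)) ∧
    (Odd n → SubConjTo (Cgrp n 1 1) (Cpgrp n) ∧ SubConjTo (Cgrp n 1 1) (Dp1grp n)) := by
  refine ⟨?_, ?_, ?_, ?_, ?_⟩
  · -- (1) `C(n,k/ℓ) ≺ D(n,k/ℓ)`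
    apply subConjTo_of_le
    unfold Cgrp
    rw [Subgroup.closure_le]
    rintro x (rfl | rfl)
    exacts [chor_mem_Dgrp n k ℓ, g0_mem_Dgrp n k ℓ]
  · -- (2) the `C ≺ C` criterion
    constructor
    · intro hsc
      obtain ⟨γ, hγ⟩ := subConjTo_mem hsc
      have hg0 : γ * g0El n k ℓ * γ⁻¹ ∈ Cgrp n k' ℓ' := hγ _ (g0_mem_Cgrp n k ℓ)
      unfold Cgrp at hg0
      obtain ⟨a, b, hab⟩ := mem_closure_pair_of_commute (commute_chorEl_g0El n k' ℓ') hg0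
      exact key_extract n hk hk' γ a b hab
    · rintro ⟨hdvd, hmod | hmod⟩
      · apply subConjTo_of_le
        unfold Cgrp
        rw [Subgroup.closure_le]
        rintro x (rfl | rfl)
        · exact chor_mem_Cgrp n k' ℓ'
        · rw [g0El_eq_zpow n hk hk' hdvd hmod]
          exact Subgroup.zpow_mem _ (g0_mem_Cgrp n k' ℓ') _
      · unfold Cgrp
        apply subConjTo_closure (wEl n)
        rintro x (rfl | rfl)
        · rw [wEl_conj_chorEl]
          exact inv_mem (chor_mem_Cgrp n k' ℓ')
        · rw [wEl_g0El_eq n hk hk' hdvd hmod]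
          exact Subgroup.zpow_mem _ (g0_mem_Cgrp n k' ℓ') _
  · -- (3) the `D ≺ D` criterion
    constructor
    · intro hsc
      obtain ⟨γ, hγ⟩ := subConjTo_mem hsc
      have hg0 : γ * g0El n k ℓ * γ⁻¹ ∈ Dgrp n k' ℓ' := hγ _ (g0_mem_Dgrp n k ℓ)
      unfold Dgrp at hg0
      obtain ⟨a, b, hab | hab⟩ := mem_closure_triple (commute_chorEl_g0El n k' ℓ')
        (reflEl_conj_chorEl n) (reflEl_conj_g0El n k' ℓ') (reflEl_sq n) hg0
      · exact key_extract n hk hk' γ a b hab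
      · exfalso
        rw [chorEl_mul_g0El_zpow] at hab
        have hrev := congrArg (fun z : FullG n => z.2.rev) hab
        simp [g0El, reflEl, TimeSym.tref, Prod.snd_mul] at hrev
    · rintro ⟨hdvd, hmod | hmod⟩
      · apply subConjTo_of_le
        unfold Dgrp
        rw [Subgroup.closure_le]
        rintro x (rfl | rfl | rfl)
        · exact chor_mem_Dgrp n k' ℓ'
        · rw [g0El_eq_zpow n hk hk' hdvd hmod]
          exact Subgroup.zpow_mem _ (g0_mem_Dgrp n k' ℓ') _
        · exact refl_mem_Dgrp n k' ℓ'
      · unfold Dgrp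
        apply subConjTo_closure (wEl n)
        rintro x (rfl | rfl | rfl)
        · rw [wEl_conj_chorEl]
          exact inv_mem (chor_mem_Dgrp n k' ℓ')
        · rw [wEl_g0El_eq n hk hk' hdvd hmod]
          exact Subgroup.zpow_mem _ (g0_mem_Dgrp n k' ℓ') _
        · rw [wEl_conj_reflEl]
          exact refl_mem_Dgrp n k' ℓ'
  · -- (4) exceptional inclusions into `D'(n,2)`
    intro hodd
    have hcp : cpEl n ∈ Dp2grp n := Subgroup.subset_closure (Set.mem_insert _ _)
    have hrpi : rpiEl n ∈ Dp2grp n :=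
      Subgroup.subset_closure (Set.mem_insert_of_mem _ rfl)
    constructor
    · apply subConjTo_of_le
      unfold Cpgrp
      rw [Subgroup.zpowers_le]
      exact hcp
    · apply subConjTo_of_le
      unfold Dp1grp
      rw [Subgroup.closure_le]
      rintro x (rfl | rfl)
      · rw [← cpEl_sq n hodd]
        exact mul_mem hcp hcp
      · exact hrpi
  · -- (5) `C(n,1)` inside the exceptional groups
    intro hodd
    constructor
    · apply subConjTo_of_le
      unfold Cgrp
      rw [Subgroup.closure_le]
      rintro x (rfl | rfl)
      · rw [← cpEl_sq n hodd]
        exact mul_mem (Subgroup.mem_zpowers _) (Subgroup.mem_zpowers _)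
      · rw [g0El_one_one]
        exact one_mem _
    · apply subConjTo_of_le
      unfold Cgrp
      rw [Subgroup.closure_le]
      rintro x (rfl | rfl)
      · exact Subgroup.subset_closure (Set.mem_insert _ _)
      · rw [g0El_one_one]
        exact one_mem _

end
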